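/- Matching a non-linear pattern decomposes into linear matching plus a consistency check: for all terms t and u, letting t′ = rename₁(t, ε) and P = {{p | t[p] = x} | x ∈ vars(t)} be the consistency partition induced by t, the term u matches t if and only if u matches t′ and u is consistent with respect to P (i.e., for every class C ∈ P and all positions p, q ∈ C, u[p] = u[q]). -/
import Mathlib


inductive Term (V F : Type) : Type where
  | var : V → Term V F
  | app : F → List (Term V F) → Term V F

namespace Term

variable {V W U F : Type}

/-- Equality modulo variables. -/
inductive EqMod : Term V F → Term W F → Prop
  | var (x : V) (y : W) : EqMod (var x) (var y)
  | app (f : F) {ts : List (Term V F)} {us : List (Term W F)}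
      (hlen : ts.length = us.length)
      (h : ∀ tu ∈ List.zip ts us, EqMod tu.1 tu.2) :
      EqMod (app f ts) (app f us)

/-- Subterm at a position (0-based). -/
def subterm : List ℕ → Term V F → Option (Term V F)
  | [], t => some t
  | _ :: _, var _ => none
  | i :: p, app _ ts => (ts[i]?).bind (subterm p)

/-- Homomorphic application of a substitution. -/
def subst (σ : V → Term W F) : Term V F → Term W F
  | var x => σ x
  | app f ts => app f (ts.attach.map fun t => subst σ t.1)
termination_by t => sizeOf t
decreasing_by simp only [Term.app.sizeOf_spec]; have := List.sizeOf_lt_of_mem t.2; omega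

/-- Number of occurrences of a variable. -/
def countVar [DecidableEq V] (x : V) : Term V F → ℕ
  | var y => if y = x then 1 else 0
  | app _ ts => (ts.attach.map fun t => countVar x t.1).sum
termination_by t => sizeOf t
decreasing_by simp only [Term.app.sizeOf_spec]; have := List.sizeOf_lt_of_mem t.2; omega

/-- A term is linear if every variable occurs at most once. -/
def Linear [DecidableEq V] (t : Term V F) : Prop := ∀ x, countVar x t ≤ 1

/-- Well-formed with respect to a ranked alphabet. -/
inductive WF (ar : F → ℕ) : Term V F → Prop
  | var (x : V) : WF ar (var x)
  | app (f : F) {ts : List (Term V F)} (hlen : ts.length = ar f)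
      (h : ∀ t ∈ ts, WF ar t) : WF ar (app f ts)

/-- Ground terms contain no variables. -/
inductive Ground : Term V F → Prop
  | app (f : F) {ts : List (Term V F)} (h : ∀ t ∈ ts, Ground t) : Ground (app f ts)

/-- Renaming: replace the variable at position p by the position variable p. -/
def rename1 : Term V F → List ℕ → Term (List ℕ) F
  | var _, p => var p
  | app f ts, p => app f (ts.attach.mapIdx fun i t => rename1 t.1 (p ++ [i]))
termination_by t _ => sizeOf t
decreasing_by simp only [Term.app.sizeOf_spec]; have := List.sizeOf_lt_of_mem t.2; omega

end Term

namespace Term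

variable {V W F : Type}

lemma getElem?_subst_list (σ : V → Term W F) (ts : List (Term V F)) (i : ℕ) :
    (ts.attach.map fun t => subst σ t.1)[i]? = ts[i]?.map (subst σ) := by
  cases h : ts[i]? <;> simp [h]

lemma getElem?_rename1_list (ts : List (Term V F)) (q : List ℕ) (i : ℕ) :
    (ts.attach.mapIdx fun j t => rename1 t.1 (q ++ [j]))[i]? =
      ts[i]?.map (fun a => rename1 a (q ++ [i])) := by
  cases h : ts[i]? <;> simp [List.getElem?_mapIdx, h]

lemma subterm_subst (σ : V → Term W F) :
    ∀ (p : List ℕ) (t s : Term V F), subterm p t = some s →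
      subterm p (subst σ t) = some (subst σ s)
  | [], t, s, h => by
      simp only [subterm, Option.some.injEq] at h ⊢; rw [h]
  | i :: p, var x, s, h => by simp [subterm] at h
  | i :: p, app f ts, s, h => by
      rw [subterm] at h
      obtain ⟨a, ha, has⟩ : ∃ a, ts[i]? = some a ∧ subterm p a = some s := by
        cases h' : ts[i]? with
        | none => rw [h'] at h; simp at h
        | some a => rw [h'] at h; exact ⟨a, rfl, h⟩
      rw [subst, subterm, getElem?_subst_list, ha, Option.map_some, Option.bind_some]
      exact subterm_subst σ p a s has

lemma subterm_rename1 :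
    ∀ (p : List ℕ) (t : Term V F) (q : List ℕ) (x : V),
      subterm p t = some (var x) → subterm p (rename1 t q) = some (var (q ++ p))
  | [], t, q, x, h => by
      simp only [subterm, Option.some.injEq] at h
      subst h
      rw [rename1]
      simp [subterm]
  | i :: p, var y, q, x, h => by simp [subterm] at h
  | i :: p, app f ts, q, x, h => by
      rw [subterm] at h
      obtain ⟨a, ha, has⟩ : ∃ a, ts[i]? = some a ∧ subterm p a = some (var x) := by
        cases h' : ts[i]? with
        | none => rw [h'] at h; simp at h
        | some a => rw [h'] at h; exact ⟨a, rfl, h⟩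
      rw [rename1, subterm, getElem?_rename1_list, ha, Option.map_some, Option.bind_some]
      rw [subterm_rename1 p a (q ++ [i]) x has]
      simp

lemma subst_eq_subst_rename1 (t : Term V F) (q : List ℕ) (σ : V → Term W F)
    (τ : List ℕ → Term W F)
    (h : ∀ p x, subterm p t = some (var x) → τ (q ++ p) = σ x) :
    subst τ (rename1 t q) = subst σ t := by
  match t with
  | var x =>
      rw [rename1, subst, subst]
      have := h [] x (by rw [subterm])
      simpa using this
  | app f ts =>
      rw [rename1, subst, subst]
      congr 1
      apply List.ext_getElem?
      intro i
      rw [getElem?_subst_list, getElem?_rename1_list, getElem?_subst_list]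
      cases hts : ts[i]? with
      | none => simp
      | some a =>
          simp only [Option.map_some, Option.some.injEq]
          exact subst_eq_subst_rename1 a (q ++ [i]) σ τ (fun p x hp => by
            have := h (i :: p) x (by rw [subterm, hts, Option.bind_some]; exact hp)
            simpa using this)
termination_by sizeOf t
decreasing_by
  have := List.sizeOf_lt_of_mem (List.mem_of_getElem? hts)
  simp only [Term.app.sizeOf_spec]; omega

end Term

theorem match_iff_linear_match_and_consistent {V F : Type} (t u : Term V F) :
    (∃ σ : V → Term V F, Term.subst σ t = u) ↔
      ((∃ σ : List ℕ → Term V F, Term.subst σ (Term.rename1 t []) = u) ∧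
        ∀ (p q : List ℕ) (x : V), Term.subterm p t = some (Term.var x) →
          Term.subterm q t = some (Term.var x) →
          Term.subterm p u = Term.subterm q u) := by
  constructor
  · rintro ⟨σ, rfl⟩
    constructor
    · refine ⟨fun p => ((Term.subterm p t).map (Term.subst σ)).getD (Term.subst σ t), ?_⟩
      apply Term.subst_eq_subst_rename1
      intro p x hp
      simp [hp, Term.subst]
    · intro p q x hp hq
      rw [Term.subterm_subst σ p t _ hp, Term.subterm_subst σ q t _ hq]
  · rintro ⟨⟨τ, hτ⟩, hcons⟩
    classical
    have key : ∀ p x, Term.subterm p t = some (Term.var x) →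
        Term.subterm p u = some (τ p) := by
      intro p x hp
      rw [← hτ]
      have h1 := Term.subterm_rename1 p t [] x hp
      simp only [List.nil_append] at h1
      have := Term.subterm_subst τ p _ _ h1
      rwa [Term.subst] at this
    refine ⟨fun x => if h : ∃ p, Term.subterm p t = some (Term.var x)
        then τ h.choose else u, ?_⟩
    rw [← hτ]
    symm
    apply Term.subst_eq_subst_rename1
    intro p x hp
    simp only [List.nil_append]
    have hex : ∃ p, Term.subterm p t = some (Term.var x) := ⟨p, hp⟩
    rw [dif_pos hex]
    have h1 := key p x hp
    have h2 := key hex.choose x hex.choose_spec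
    have := hcons p hex.choose x hp hex.choose_spec
    rw [h1, h2] at this
    exact Option.some.inj this
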